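/- Let V be a ℚ-algebra and let π₀, π₁, …, πₙ be idempotents in V such that πᵢ·πⱼ = 0 whenever i < j. For each i define pᵢ := (1 − ½πₙ)⋯(1 − ½π₍ᵢ₊₁₎) · πᵢ · (1 − ½π₍ᵢ₋₁₎)⋯(1 − ½π₀). Then for every i one has πᵢ·pᵢ·πᵢ = πᵢ and pᵢ·πᵢ·pᵢ = pᵢ. Consequently, setting a := pᵢ·πᵢ and b := πᵢ·pᵢ, one has a·b = pᵢ and b·a = πᵢ, so πᵢ and pᵢ are equivalent idempotents. -/
import Mathlib


/-- One step of the non-commutative Gram–Schmidt process: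
`gs n π i = (1 − ½πₙ)⋯(1 − ½π₍ᵢ₊₁₎) · πᵢ · (1 − ½π₍ᵢ₋₁₎)⋯(1 − ½π₀)`,
where the factors in each product are taken with decreasing index from left to right. -/
def gs {V : Type*} [Ring V] [Algebra ℚ V] (n : ℕ) (π : ℕ → V) (i : ℕ) : V :=
  (((List.range (n - i)).map (fun k => (1 : V) - ((2 : ℚ)⁻¹) • π (n - k))).prod)
    * π i *
  (((List.range i).map (fun k => (1 : V) - ((2 : ℚ)⁻¹) • π (i - 1 - k))).prod)

lemma gs_left_absorb {V : Type*} [Ring V] [Algebra ℚ V] (π : ℕ → V) (n : ℕ) (x : V) :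
    ∀ m, (∀ k, k < m → x * π (n - k) = 0) →
      x * (((List.range m).map (fun k => (1 : V) - ((2 : ℚ)⁻¹) • π (n - k))).prod) = x := by
  intro m
  induction m with
  | zero => simp
  | succ m ih =>
    intro h
    rw [List.range_succ, List.map_append, List.prod_append]
    simp only [List.map_cons, List.map_nil, List.prod_cons, List.prod_nil, mul_one]
    rw [← mul_assoc, ih (fun k hk => h k (Nat.lt_succ_of_lt hk)),
        mul_sub, mul_one, mul_smul_comm, h m (Nat.lt_succ_self m), smul_zero, sub_zero]

lemma gs_right_absorb {V : Type*} [Ring V] [Algebra ℚ V] (π : ℕ → V) (i : ℕ) (y : V) :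
    ∀ m, (∀ k, k < m → π (i - 1 - k) * y = 0) →
      (((List.range m).map (fun k => (1 : V) - ((2 : ℚ)⁻¹) • π (i - 1 - k))).prod) * y = y := by
  intro m
  induction m with
  | zero => simp
  | succ m ih =>
    intro h
    rw [List.range_succ, List.map_append, List.prod_append]
    simp only [List.map_cons, List.map_nil, List.prod_cons, List.prod_nil, mul_one]
    rw [mul_assoc, sub_mul, one_mul, smul_mul_assoc, h m (Nat.lt_succ_self m), smul_zero,
        sub_zero, ih (fun k hk => h k (Nat.lt_succ_of_lt hk))]

/-- The idempotents produced by one step of the non-commutative Gram–Schmidt process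
are equivalent to the original ones: with `pᵢ := gs n π i` one has `πᵢ·pᵢ·πᵢ = πᵢ` and
`pᵢ·πᵢ·pᵢ = pᵢ`, so that `a := pᵢ·πᵢ` and `b := πᵢ·pᵢ` satisfy `a·b = pᵢ` and `b·a = πᵢ`. -/
theorem stmt_2 {V : Type*} [Ring V] [Algebra ℚ V] (n : ℕ) (π : ℕ → V)
    (hidem : ∀ i, i ≤ n → π i * π i = π i)
    (horth : ∀ i j, i ≤ n → j ≤ n → i < j → π i * π j = 0) :
    ∀ i, i ≤ n →
      π i * gs n π i * π i = π i ∧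
      gs n π i * π i * gs n π i = gs n π i ∧
      (gs n π i * π i) * (π i * gs n π i) = gs n π i ∧
      (π i * gs n π i) * (gs n π i * π i) = π i := by
  intro i hi
  set L := (((List.range (n - i)).map (fun k => (1 : V) - ((2 : ℚ)⁻¹) • π (n - k))).prod) with hLdef
  set R := (((List.range i).map (fun k => (1 : V) - ((2 : ℚ)⁻¹) • π (i - 1 - k))).prod) with hRdef
  have hgs : gs n π i = L * π i * R := rfl
  have hii := hidem i hi
  have hL : π i * L = π i :=
    gs_left_absorb π n (π i) (n - i) fun k hk =>
      horth i (n - k) hi (by omega) (by omega)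
  have hRk : ∀ j, j ≤ n → i ≤ j → R * π j = π j := fun j hj hij =>
    gs_right_absorb π i (π j) i fun k hk =>
      horth (i - 1 - k) j (by omega) hj (by omega)
  have hR : R * π i = π i := hRk i hi le_rfl
  have hx : (π i * R) * L = π i * R :=
    gs_left_absorb π n (π i * R) (n - i) fun k hk => by
      rw [mul_assoc, hRk (n - k) (by omega) (by omega),
        horth i (n - k) hi (by omega) (by omega)]
  have hii' : ∀ x : V, π i * (π i * x) = π i * x := fun x => by rw [← mul_assoc, hii]
  have h1 : π i * (L * π i * R) = π i * R := by
    rw [← mul_assoc, ← mul_assoc, hL, hii]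
  have h2 : (L * π i * R) * π i = L * π i := by
    rw [mul_assoc, hR, mul_assoc, hii]
  refine ⟨?_, ?_, ?_, ?_⟩
  · rw [hgs, h1, mul_assoc, hR, hii]
  · rw [hgs, h2, mul_assoc, h1, ← mul_assoc]
  · rw [hgs, h2, h1, mul_assoc, hii', ← mul_assoc]
  · rw [hgs, h1, h2, ← mul_assoc, hx, mul_assoc, hR, hii]
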